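/- Inserting an edge between two unsaturated endpoints simply adds the edge to the matching (Lemma 5 of the paper): let M be a stable b-matching of G and let e = {u,v} be an unordered pair of distinct vertices with e ∉ E. If both u and v are unsaturated in M, then M ∪ {e} is a stable b-matching of the graph G + e (obtained by adding edge e); hence the stable b-matching of G + e equals M ∪ {e}. -/
import Mathlib


/-!
Framework: finite simple graph `G` on vertex set `V`, positive edge weights `ω` on
unordered pairs of distinct vertices, capacities `b`, and a strict linear order
`prec` on unordered pairs of distinct vertices refining `ω`
(the paper's tie-breaking rule).  `M` is a set of edges.
-/

variable {V : Type*} [Fintype V] [DecidableEq V]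

/-- Number of edges of `M` incident to vertex `u`. -/
def bDeg (M : Finset (Sym2 V)) (u : V) : ℕ :=
  (M.filter (fun e => u ∈ e)).card

/-- `u` is saturated in `M`: it is incident to exactly `b u` edges of `M`. -/
def Saturated (b : V → ℕ) (M : Finset (Sym2 V)) (u : V) : Prop :=
  bDeg M u = b u

/-- `M` is a `b`-matching of `G`: a set of edges of `G` such that every vertex `u`
is incident to at most `b u` edges of `M`. -/
def IsBMatching (G : SimpleGraph V) (b : V → ℕ) (M : Finset (Sym2 V)) : Prop :=
  (∀ e ∈ M, e ∈ G.edgeSet) ∧ ∀ u : V, bDeg M u ≤ b u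

/-- `M` is a stable `b`-matching of `G` (termination condition of the b-suitor
algorithm): for every non-matching edge `e` of `G` there is an endpoint `x` of `e`
which is saturated and all of whose matched edges beat `e` in the order `prec`. -/
def IsStable (G : SimpleGraph V) (b : V → ℕ) (prec : Sym2 V → Sym2 V → Prop)
    (M : Finset (Sym2 V)) : Prop :=
  IsBMatching G b M ∧
    ∀ e ∈ G.edgeSet, e ∉ M →
      ∃ x ∈ e, Saturated b M x ∧ ∀ f ∈ M, x ∈ f → prec e f

/-- Lemma 5: inserting an edge between two unsaturated endpoints
simply adds the edge to the matching. -/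
theorem insert_edge_both_unsaturated
    (G : SimpleGraph V) (ω : Sym2 V → ℝ) (b : V → ℕ)
    (prec : Sym2 V → Sym2 V → Prop)
    (hω : ∀ e : Sym2 V, ¬ e.IsDiag → 0 < ω e)
    (hirr : ∀ e : Sym2 V, ¬ prec e e)
    (htrans : ∀ e f g : Sym2 V, prec e f → prec f g → prec e g)
    (htotal : ∀ e f : Sym2 V, ¬ e.IsDiag → ¬ f.IsDiag → e ≠ f → prec e f ∨ prec f e)
    (href : ∀ e f : Sym2 V, ¬ e.IsDiag → ¬ f.IsDiag → ω e < ω f → prec e f)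
    (u v : V) (huv : u ≠ v) (hnotE : s(u, v) ∉ G.edgeSet)
    (M : Finset (Sym2 V)) (hM : IsStable G b prec M)
    (hu : ¬ Saturated b M u) (hv : ¬ Saturated b M v) :
    IsStable (G ⊔ SimpleGraph.fromEdgeSet {s(u, v)}) b prec (insert s(u, v) M) := by
  obtain ⟨⟨hMsub, hMdeg⟩, hstab⟩ := hM
  have heM : s(u, v) ∉ M := fun h => hnotE (hMsub _ h)
  have hdiag : ¬ (s(u, v) : Sym2 V).IsDiag := by simp [huv]
  have hdeg_insert : ∀ w, bDeg (insert s(u, v) M) w =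
      if w ∈ (s(u, v) : Sym2 V) then bDeg M w + 1 else bDeg M w := by
    intro w
    unfold bDeg
    rw [Finset.filter_insert]
    by_cases hw : w ∈ (s(u, v) : Sym2 V)
    · rw [if_pos hw, if_pos hw, Finset.card_insert_of_notMem (by simp [heM])]
    · rw [if_neg hw, if_neg hw]
  refine ⟨⟨?_, ?_⟩, ?_⟩
  · intro e he
    rcases Finset.mem_insert.mp he with rfl | heM'
    · rw [SimpleGraph.edgeSet_sup]
      right
      simp [SimpleGraph.edgeSet_fromEdgeSet, hdiag]
    · rw [SimpleGraph.edgeSet_sup]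
      exact Or.inl (hMsub e heM')
  · intro w
    rw [hdeg_insert w]
    by_cases hw : w ∈ (s(u, v) : Sym2 V)
    · rw [if_pos hw]
      have : bDeg M w ≠ b w := by
        rcases Sym2.mem_iff.mp hw with rfl | rfl
        · exact hu
        · exact hv
      exact Nat.succ_le_of_lt (lt_of_le_of_ne (hMdeg w) this)
    · rw [if_neg hw]; exact hMdeg w
  · intro e he heM'
    have heuv : e ≠ s(u, v) := by
      rintro rfl
      exact heM' (Finset.mem_insert_self _ _)
    have heG : e ∈ G.edgeSet := by
      rw [SimpleGraph.edgeSet_sup] at he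
      rcases he with h | h
      · exact h
      · rw [SimpleGraph.edgeSet_fromEdgeSet] at h
        exact absurd h.1 heuv
    obtain ⟨x, hx, hsat, hf⟩ := hstab e heG (fun h => heM' (Finset.mem_insert_of_mem h))
    have hxuv : x ∉ (s(u, v) : Sym2 V) := by
      intro hmem
      rcases Sym2.mem_iff.mp hmem with rfl | rfl
      · exact hu hsat
      · exact hv hsat
    refine ⟨x, hx, ?_, ?_⟩
    · unfold Saturated
      rw [hdeg_insert x, if_neg hxuv]
      exact hsat
    · intro f hfmem hxf
      rcases Finset.mem_insert.mp hfmem with rfl | hfM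
      · exact absurd hxf hxuv
      · exact hf f hfM hxf
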